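/- arXiv:math/0304239 — 2 statements merged into one kernel-verified Lean document; each statement's English description precedes it below -/
import Mathlib

section
/- Let H be an inner product space over 𝕜 (𝕜 = ℝ or ℂ), x, y, e ∈ H with ‖e‖ = 1, and real numbers a, A, b, B with A > a > 0 and B > b > 0. If ‖x − ((a+A)/2)e‖ ≤ (1/2)(A − a) and ‖y − ((b+B)/2)e‖ ≤ (1/2)(B − b), then |⟨x,y⟩ − ⟨x,e⟩⟨e,y⟩| ≤ (1/4)·((A − a)(B − b)/√(abAB))·|⟨x,e⟩⟨e,y⟩|. -/
open RCLike

lemma gruss_key {𝕜 H : Type*} [RCLike 𝕜] [NormedAddCommGroup H] [InnerProductSpace 𝕜 H]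
    (x e : H) (he : ‖e‖ = 1) (a A : ℝ) (ha : 0 < a) (haA : a < A)
    (hx : ‖x - (((a + A) / 2 : ℝ) : 𝕜) • e‖ ≤ (1 / 2) * (A - a)) :
    ‖x - (inner 𝕜 e x : 𝕜) • e‖ ^ 2 ≤ (A - a)^2 / (4*a*A) * ‖(inner 𝕜 e x : 𝕜)‖^2 := by
  set s : ℝ := ‖(inner 𝕜 e x : 𝕜)‖ with hs
  have h1 : ‖x - (inner 𝕜 e x : 𝕜) • e‖ ^ 2 = ‖x‖^2 - s^2 := by
    rw [@norm_sub_sq 𝕜, inner_smul_right, norm_smul, he,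
      show (inner 𝕜 x e : 𝕜) = starRingEnd 𝕜 (inner 𝕜 e x) from (inner_conj_symm x e).symm,
      RCLike.mul_conj]
    simp only [← RCLike.ofReal_pow, RCLike.ofReal_re, mul_one]
    ring
  have h2 : ‖x‖^2 ≤ (a + A) * re (inner 𝕜 e x : 𝕜) - a * A := by
    have hsq : ‖x - (((a + A) / 2 : ℝ) : 𝕜) • e‖ ^ 2 ≤ ((1 / 2) * (A - a))^2 := by
      have := norm_nonneg (x - (((a + A) / 2 : ℝ) : 𝕜) • e)
      nlinarith
    rw [@norm_sub_sq 𝕜, inner_smul_right, norm_smul, he] at hsq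
    simp only [RCLike.norm_ofReal, mul_one, RCLike.re_ofReal_mul] at hsq
    rw [show re (inner 𝕜 x e : 𝕜) = re (inner 𝕜 e x : 𝕜) from inner_re_symm x e] at hsq
    have habs : |(a+A)/2| = (a+A)/2 := abs_of_nonneg (by linarith)
    rw [habs] at hsq
    nlinarith [hsq]
  have h3 : re (inner 𝕜 e x : 𝕜) ≤ s := RCLike.re_le_norm _
  have h4 : 0 ≤ s := norm_nonneg _
  rw [h1]
  have key : 0 ≤ ((a+A)*s - 2*a*A)^2 := sq_nonneg _
  have hA : 0 < A := ha.trans haA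
  have h4aA : (0:ℝ) ≤ 4*a*A := by positivity
  rw [div_mul_eq_mul_div, le_div_iff₀ (by positivity)]
  nlinarith [key, mul_le_mul_of_nonneg_right h2 h4aA,
    mul_le_mul_of_nonneg_right (mul_le_mul_of_nonneg_left h3 (by linarith : (0:ℝ) ≤ a+A)) h4aA]

/-- **A Grüss type inequality with positive real bounds** (Corollary 3). -/
theorem gruss_companion_real_bounds {𝕜 H : Type*} [RCLike 𝕜] [NormedAddCommGroup H]
    [InnerProductSpace 𝕜 H] (x y e : H) (he : ‖e‖ = 1) (a A b B : ℝ)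
    (ha : 0 < a) (haA : a < A) (hb : 0 < b) (hbB : b < B)
    (hx : ‖x - (((a + A) / 2 : ℝ) : 𝕜) • e‖ ≤ (1 / 2) * (A - a))
    (hy : ‖y - (((b + B) / 2 : ℝ) : 𝕜) • e‖ ≤ (1 / 2) * (B - b)) :
    ‖(inner 𝕜 x y : 𝕜) - (inner 𝕜 x e : 𝕜) * (inner 𝕜 e y : 𝕜)‖ ≤
      (1 / 4 : ℝ) * ((A - a) * (B - b) / Real.sqrt (a * b * A * B)) *
        ‖(inner 𝕜 x e : 𝕜) * (inner 𝕜 e y : 𝕜)‖ := by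
  have hA : 0 < A := ha.trans haA
  have hB : 0 < B := hb.trans hbB
  set u := x - (inner 𝕜 e x : 𝕜) • e
  set v := y - (inner 𝕜 e y : 𝕜) • e
  have huv : (inner 𝕜 u v : 𝕜) = (inner 𝕜 x y : 𝕜) - (inner 𝕜 x e : 𝕜) * (inner 𝕜 e y : 𝕜) := by
    have hee : (inner 𝕜 e e : 𝕜) = 1 := by
      rw [inner_self_eq_norm_sq_to_K, he]; simp
    simp only [u, v, inner_sub_left, inner_sub_right, inner_smul_left, inner_smul_right, hee,
      mul_one]
    rw [show starRingEnd 𝕜 (inner 𝕜 e x) = (inner 𝕜 x e : 𝕜) from inner_conj_symm x e]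
    ring
  set sx : ℝ := ‖(inner 𝕜 e x : 𝕜)‖
  set sy : ℝ := ‖(inner 𝕜 e y : 𝕜)‖
  have hu2 := gruss_key x e he a A ha haA hx
  have hv2 := gruss_key y e he b B hb hbB hy
  have hu : ‖u‖ ≤ Real.sqrt ((A - a)^2 / (4*a*A)) * sx := by
    have h := Real.sqrt_le_sqrt hu2
    rwa [Real.sqrt_sq (norm_nonneg _), Real.sqrt_mul (by positivity), Real.sqrt_sq (norm_nonneg _)]
      at h
  have hv : ‖v‖ ≤ Real.sqrt ((B - b)^2 / (4*b*B)) * sy := by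
    have h := Real.sqrt_le_sqrt hv2
    rwa [Real.sqrt_sq (norm_nonneg _), Real.sqrt_mul (by positivity), Real.sqrt_sq (norm_nonneg _)]
      at h
  have hconst : Real.sqrt ((A - a)^2 / (4*a*A)) * Real.sqrt ((B - b)^2 / (4*b*B))
      = (1 / 4 : ℝ) * ((A - a) * (B - b) / Real.sqrt (a * b * A * B)) := by
    rw [← Real.sqrt_mul (by positivity)]
    have hc : (0:ℝ) ≤ (1 / 4 : ℝ) * ((A - a) * (B - b) / Real.sqrt (a * b * A * B)) := by
      have h1 : (0:ℝ) ≤ (A - a) * (B - b) := by nlinarith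
      have h2 := Real.sqrt_nonneg (a * b * A * B)
      have := div_nonneg h1 h2
      linarith
    rw [show (A - a)^2 / (4*a*A) * ((B - b)^2 / (4*b*B))
        = ((1 / 4 : ℝ) * ((A - a) * (B - b) / Real.sqrt (a * b * A * B)))^2 by
      rw [mul_pow, div_pow, div_pow, Real.sq_sqrt (by positivity)]
      field_simp]
    exact Real.sqrt_sq hc
  calc ‖(inner 𝕜 x y : 𝕜) - (inner 𝕜 x e : 𝕜) * (inner 𝕜 e y : 𝕜)‖
      = ‖(inner 𝕜 u v : 𝕜)‖ := by rw [huv]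
    _ ≤ ‖u‖ * ‖v‖ := norm_inner_le_norm u v
    _ ≤ (Real.sqrt ((A - a)^2 / (4*a*A)) * sx) * (Real.sqrt ((B - b)^2 / (4*b*B)) * sy) := by
        exact mul_le_mul hu hv (norm_nonneg _) (by positivity)
    _ = (1 / 4 : ℝ) * ((A - a) * (B - b) / Real.sqrt (a * b * A * B)) * (sx * sy) := by
        rw [← hconst]; ring
    _ = (1 / 4 : ℝ) * ((A - a) * (B - b) / Real.sqrt (a * b * A * B)) *
        ‖(inner 𝕜 x e : 𝕜) * (inner 𝕜 e y : 𝕜)‖ := by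
        rw [norm_mul, show ‖(inner 𝕜 x e : 𝕜)‖ = sx from norm_inner_symm x e]
end

section
/- Let H be an inner product space over 𝕜 (𝕜 = ℝ or ℂ), x, y, e ∈ H with ‖e‖ = 1 and ⟨x,e⟩ ≠ 0, ⟨e,y⟩ ≠ 0, and real numbers a, A, b, B with A > a > 0, B > b > 0. If ‖x − ((a+A)/2)e‖ ≤ (1/2)(A − a) and ‖y − ((b+B)/2)e‖ ≤ (1/2)(B − b), then |⟨x,y⟩/(⟨x,e⟩⟨e,y⟩) − 1| ≤ (1/4)·(A − a)(B − b)/√(abAB). -/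
open RCLike

lemma gruss_aux {𝕜 H : Type*} [RCLike 𝕜] [NormedAddCommGroup H]
    [InnerProductSpace 𝕜 H] (x e : H) (he : ‖e‖ = 1) (a A : ℝ)
    (ha : 0 < a) (haA : a < A)
    (hx : ‖x - (((a + A) / 2 : ℝ) : 𝕜) • e‖ ≤ (1 / 2) * (A - a)) :
    2 * Real.sqrt (a * A) * ‖x - (inner 𝕜 e x) • e‖ ≤
      (A - a) * ‖(inner 𝕜 x e)‖ := by
  set t := ‖(inner 𝕜 x e)‖ with ht
  set c : ℝ := (a + A) / 2 with hc
  have hball : ‖x‖ ^ 2 + a * A ≤ (a + A) * re (inner 𝕜 x e) := by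
    have h1 : ‖x - ((c : ℝ) : 𝕜) • e‖ ^ 2 ≤ ((1 / 2) * (A - a)) ^ 2 := by
      have := norm_nonneg (x - ((c : ℝ) : 𝕜) • e)
      nlinarith
    rw [@norm_sub_sq 𝕜, inner_smul_right, RCLike.re_ofReal_mul, norm_smul,
      RCLike.norm_ofReal, he] at h1
    have hcabs : |c| = c := abs_of_pos (by rw [hc]; linarith)
    rw [hcabs] at h1
    rw [hc] at h1
    nlinarith [h1]
  have hre : re (inner 𝕜 x e) ≤ t := RCLike.re_le_norm _
  have hs : Real.sqrt (a * A) ^ 2 = a * A := Real.sq_sqrt (by nlinarith)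
  have hs0 : 0 < Real.sqrt (a * A) := Real.sqrt_pos.2 (by nlinarith)
  have hnx : 2 * Real.sqrt (a * A) * ‖x‖ ≤ (a + A) * t := by
    nlinarith [sq_nonneg (‖x‖ - Real.sqrt (a * A))]
  have hproj : ‖x - (inner 𝕜 e x) • e‖ ^ 2 = ‖x‖ ^ 2 - t ^ 2 := by
    have hts : ‖(inner 𝕜 e x)‖ = t := by rw [ht]; exact norm_inner_symm e x
    rw [@norm_sub_sq 𝕜, inner_smul_right, ← inner_conj_symm x e,
      RCLike.mul_conj, norm_smul, he, ← RCLike.ofReal_pow, RCLike.ofReal_re, hts]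
    ring
  have ht0 : 0 ≤ t := norm_nonneg _
  have hnx2 : 4 * (a * A) * ‖x‖ ^ 2 ≤ (a + A) ^ 2 * t ^ 2 := by
    nlinarith [norm_nonneg x,
      mul_nonneg (mul_nonneg (by norm_num : (0:ℝ) ≤ 2) hs0.le) (norm_nonneg x)]
  have hkey : (2 * Real.sqrt (a * A) * ‖x - (inner 𝕜 e x) • e‖) ^ 2 ≤
      ((A - a) * t) ^ 2 := by
    nlinarith [norm_nonneg (x - (inner 𝕜 e x) • e)]
  have h2 : 0 ≤ 2 * Real.sqrt (a * A) * ‖x - (inner 𝕜 e x) • e‖ :=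
    mul_nonneg (by positivity) (norm_nonneg _)
  have h3 : 0 ≤ (A - a) * t := mul_nonneg (by linarith) ht0
  nlinarith [hkey]

/-- **A Grüss type inequality in ratio form** (Remark 1, inequality (2.16)). -/
theorem gruss_companion_ratio {𝕜 H : Type*} [RCLike 𝕜] [NormedAddCommGroup H]
    [InnerProductSpace 𝕜 H] (x y e : H) (he : ‖e‖ = 1)
    (hxe : (inner 𝕜 x e) ≠ 0) (hey : (inner 𝕜 e y) ≠ 0) (a A b B : ℝ)
    (ha : 0 < a) (haA : a < A) (hb : 0 < b) (hbB : b < B)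
    (hx : ‖x - (((a + A) / 2 : ℝ) : 𝕜) • e‖ ≤ (1 / 2) * (A - a))
    (hy : ‖y - (((b + B) / 2 : ℝ) : 𝕜) • e‖ ≤ (1 / 2) * (B - b)) :
    ‖(inner 𝕜 x y) / ((inner 𝕜 x e) * (inner 𝕜 e y)) - 1‖ ≤
      (1 / 4 : ℝ) * ((A - a) * (B - b) / Real.sqrt (a * b * A * B)) := by
  have hee : (inner 𝕜 e e) = 1 := by
    rw [inner_self_eq_norm_sq_to_K, he]; norm_num
  have key : (inner 𝕜 x y) - inner 𝕜 x e * inner 𝕜 e y =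
      inner 𝕜 (x - (inner 𝕜 e x) • e) (y - (inner 𝕜 e y) • e) := by
    simp only [inner_sub_left, inner_sub_right, inner_smul_left, inner_smul_right,
      inner_conj_symm, hee, mul_one]
    ring
  have h1 := gruss_aux x e he a A ha haA hx
  have h2 := gruss_aux y e he b B hb hbB hy
  have hys : ‖(inner 𝕜 y e)‖ = ‖(inner 𝕜 e y)‖ := norm_inner_symm y e
  rw [hys] at h2
  have hcs : ‖(inner 𝕜 (x - (inner 𝕜 e x) • e) (y - (inner 𝕜 e y) • e) : 𝕜)‖ ≤
      ‖x - (inner 𝕜 e x) • e‖ * ‖y - (inner 𝕜 e y) • e‖ :=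
    norm_inner_le_norm _ _
  set t := ‖(inner 𝕜 x e)‖ with htdef
  set s := ‖(inner 𝕜 e y)‖ with hsdef
  have ht0 : 0 < t := norm_pos_iff.2 hxe
  have hs0 : 0 < s := norm_pos_iff.2 hey
  have hsa : 0 < Real.sqrt (a * A) := Real.sqrt_pos.2 (by nlinarith)
  have hsb : 0 < Real.sqrt (b * B) := Real.sqrt_pos.2 (by nlinarith)
  have hsab : Real.sqrt (a * A) * Real.sqrt (b * B) = Real.sqrt (a * b * A * B) := by
    rw [← Real.sqrt_mul (by nlinarith)]; ring_nf
  have hD : ‖(inner 𝕜 x y) - inner 𝕜 x e * inner 𝕜 e y‖ *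
      (4 * (Real.sqrt (a * A) * Real.sqrt (b * B))) ≤ (A - a) * (B - b) * (t * s) := by
    rw [key]
    have hu0 : (0:ℝ) ≤ ‖x - (inner 𝕜 e x) • e‖ := norm_nonneg _
    have hv0 : (0:ℝ) ≤ ‖y - (inner 𝕜 e y) • e‖ := norm_nonneg _
    nlinarith [mul_le_mul h1 h2 (by positivity)
        (mul_nonneg (by linarith : (0:ℝ) ≤ A - a) ht0.le),
      mul_le_mul_of_nonneg_right hcs (by positivity :
        (0:ℝ) ≤ 4 * (Real.sqrt (a * A) * Real.sqrt (b * B))),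
      norm_nonneg ((inner 𝕜 (x - (inner 𝕜 e x) • e) (y - (inner 𝕜 e y) • e) : 𝕜))]
  have hrw : (inner 𝕜 x y) / ((inner 𝕜 x e) * (inner 𝕜 e y)) - 1 =
      ((inner 𝕜 x y) - inner 𝕜 x e * inner 𝕜 e y) / (inner 𝕜 x e * inner 𝕜 e y) := by
    rw [div_sub_one (mul_ne_zero hxe hey)]
  rw [hrw, norm_div, norm_mul, ← htdef, ← hsdef]
  rw [div_le_iff₀ (by positivity)]
  rw [← hsab]
  have h4 : (0:ℝ) < Real.sqrt (a * A) * Real.sqrt (b * B) := by positivity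
  have h5 : 1 / 4 * ((A - a) * (B - b) / (Real.sqrt (a * A) * Real.sqrt (b * B))) * (t * s)
      = (A - a) * (B - b) * (t * s) / (4 * (Real.sqrt (a * A) * Real.sqrt (b * B))) := by
    field_simp
  rw [h5, le_div_iff₀ (by positivity)]
  linarith [hD]
end
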